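/- The partial derivative of G_H(x, x₀) with respect to x₀ equals (1/(4L))·Re(cot((π/(2L))(z − z₀)) − cot((π/(2L))(z − z₀'))), where z = x + iy, z₀ = x₀ + iy₀, z₀' = x₀ − iy₀. -/

import Mathlib

open Real

lemma key_deriv (a : ℝ) (z b : ℂ) (x₀ : ℝ)
    (hs0 : Complex.sin ((a : ℂ) * (z - ((x₀ : ℂ) + b))) ≠ 0) :
    HasDerivAt (fun t : ℝ =>
        Real.log (2 * ‖Complex.sin ((a : ℂ) * (z - ((t : ℂ) + b)))‖))
      (-a * (Complex.cot ((a : ℂ) * (z - ((x₀ : ℂ) + b)))).re) x₀ := by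
  set u₀ : ℂ := (a : ℂ) * (z - ((x₀ : ℂ) + b)) with hu₀
  set s₀ : ℂ := Complex.sin u₀ with hs₀def
  have habs : 0 < ‖s₀‖ := norm_pos_iff.mpr hs0
  set c : ℂ := ((‖s₀‖ : ℝ) : ℂ) / s₀ with hc
  have hc0 : c ≠ 0 := div_ne_zero (by exact_mod_cast habs.ne') hs0
  have hcs : c * s₀ = ((‖s₀‖ : ℝ) : ℂ) := div_mul_cancel₀ _ hs0
  have hcabs : ‖c‖ = 1 := by
    rw [hc, norm_div, Complex.norm_real, norm_norm, div_self habs.ne']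
  -- complex derivative
  have hinner : HasDerivAt (fun w : ℂ => (a : ℂ) * (z - (w + b))) (-(a : ℂ)) (x₀ : ℂ) := by
    have h : HasDerivAt (fun w : ℂ => z - (w + b)) (-1) (x₀ : ℂ) :=
      ((hasDerivAt_id _).add_const b).const_sub z
    simpa using h.const_mul (a : ℂ)
  have hsin : HasDerivAt (fun w : ℂ => Complex.sin ((a : ℂ) * (z - (w + b))))
      (Complex.cos u₀ * -(a : ℂ)) (x₀ : ℂ) :=
    by have := (Complex.hasDerivAt_sin u₀).comp (x₀ : ℂ) hinner; exact this
  have hmul : HasDerivAt (fun w : ℂ => c * Complex.sin ((a : ℂ) * (z - (w + b))))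
      (c * (Complex.cos u₀ * -(a : ℂ))) (x₀ : ℂ) := hsin.const_mul c
  have hslit : c * s₀ ∈ Complex.slitPlane := by
    rw [hcs]; exact Complex.ofReal_mem_slitPlane.mpr habs
  have hlog : HasDerivAt (fun w : ℂ => Complex.log (c * Complex.sin ((a : ℂ) * (z - (w + b)))))
      ((c * s₀)⁻¹ * (c * (Complex.cos u₀ * -(a : ℂ)))) (x₀ : ℂ) :=
    by have := (Complex.hasDerivAt_log hslit).comp (x₀ : ℂ) hmul; exact this
  have hder : (c * s₀)⁻¹ * (c * (Complex.cos u₀ * -(a : ℂ))) = -(a : ℂ) * Complex.cot u₀ := by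
    rw [Complex.cot_eq_cos_div_sin, ← hs₀def]
    field_simp
  rw [hder] at hlog
  have hre := hlog.real_of_complex
  have hre' : HasDerivAt (fun t : ℝ =>
      Real.log 2 + (Complex.log (c * Complex.sin ((a : ℂ) * (z - ((t : ℂ) + b))))).re)
      (-a * (Complex.cot u₀).re) x₀ := by
    have : (-(a : ℂ) * Complex.cot u₀).re = -a * (Complex.cot u₀).re := by
      rw [show -(a : ℂ) = ((-a : ℝ) : ℂ) by push_cast; ring, Complex.re_ofReal_mul]
    rw [← this]
    exact hre.const_add (Real.log 2)
  refine hre'.congr_of_eventuallyEq ?_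
  have hscont : Continuous (fun t : ℝ => Complex.sin ((a : ℂ) * (z - ((t : ℂ) + b)))) := by
    fun_prop
  have hev : ∀ᶠ t : ℝ in nhds x₀, Complex.sin ((a : ℂ) * (z - ((t : ℂ) + b))) ≠ 0 :=
    hscont.continuousAt.eventually_ne hs0
  filter_upwards [hev] with t ht
  have habs_t : ‖Complex.sin ((a : ℂ) * (z - ((t : ℂ) + b)))‖ ≠ 0 :=
    (norm_pos_iff.mpr ht).ne'
  rw [Complex.log_re, norm_mul, hcabs, one_mul,
    Real.log_mul two_ne_zero habs_t]

/-- Derivative of the periodic half-plane Green's function with respect to `x₀`: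
`∂G_H/∂x₀ = (1/(4L)) Re( cot((π/(2L))(z - z₀)) - cot((π/(2L))(z - z₀')) )`. -/
theorem stmt_3 (L : ℝ) (hL : 0 < L) (x y x₀ y₀ : ℝ) (hy : 0 < y) (hy₀ : 0 < y₀)
    (hne : (x, y) ≠ (x₀, y₀))
    (z z₀ z₀' : ℂ)
    (hz : z = (x : ℂ) + y * Complex.I)
    (hz₀ : z₀ = (x₀ : ℂ) + y₀ * Complex.I)
    (hz₀' : z₀' = (x₀ : ℂ) - y₀ * Complex.I)
    (hs : Complex.sin ((π / (2 * L)) * (z - z₀)) ≠ 0)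
    (hs' : Complex.sin ((π / (2 * L)) * (z - z₀')) ≠ 0)
    (GH : ℝ → ℝ)
    (hGH : ∀ t : ℝ, GH t =
      -(1 / (2 * π)) * (Real.log (2 * ‖(Complex.sin ((π / (2 * L)) *
            (z - ((t : ℂ) + y₀ * Complex.I))))‖)
        - Real.log (2 * ‖(Complex.sin ((π / (2 * L)) *
            (z - ((t : ℂ) - y₀ * Complex.I))))‖))) :
    HasDerivAt GH
      ((1 / (4 * L)) * (Complex.cot ((π / (2 * L)) * (z - z₀))
        - Complex.cot ((π / (2 * L)) * (z - z₀'))).re) x₀ := by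
  subst hz₀ hz₀'
  have hcast : ((π : ℂ) / (2 * (L : ℂ))) = (((π / (2 * L) : ℝ)) : ℂ) := by push_cast; ring
  simp only [hcast] at hs hs' hGH ⊢
  have h1 := key_deriv (π / (2 * L)) z ((y₀ : ℂ) * Complex.I) x₀ hs
  have h2 := key_deriv (π / (2 * L)) z (-((y₀ : ℂ) * Complex.I)) x₀
    (by simpa [sub_eq_add_neg] using hs')
  simp only [← sub_eq_add_neg] at h2
  have hsum := (h1.sub h2).const_mul (-(1 / (2 * π)))
  rw [funext hGH]
  refine hsum.congr_deriv ?_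
  rw [Complex.sub_re]
  have hπ : (π : ℝ) ≠ 0 := Real.pi_ne_zero
  field_simp
  ring
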